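/- Let p : (S₁,≤) → (S₂,≤) be a bijective monotone map of posets and let σ : B(S₂,≤) → B(S₁,≤) be a monotone map that is a section of the induced join-homomorphism B(p) : B(S₁,≤) → B(S₂,≤) (given by taking images of lower sets and closing downward). Then σ is right adjoint to B(p) (i.e., B(p)(Y) ⊆ X if and only if Y ⊆ σ(X)) and σ preserves finite joins. -/

import Mathlib

/-- Finitely generated lower subsets of a preordered set. -/
def FGLower (S : Type*) [Preorder S] : Type _ :=
  {L : LowerSet S // ∃ F : Finset S, L = lowerClosure (F : Set S)}

namespace FGLower

variable {S : Type*} [Preorder S]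

instance : SemilatticeSup (FGLower S) :=
  Subtype.semilatticeSup fun L M ⟨F, hF⟩ ⟨G, hG⟩ => by
    classical
    exact ⟨F ∪ G, by simp [hF, hG, lowerClosure_union]⟩

instance : OrderBot (FGLower S) :=
  Subtype.orderBot ⟨∅, by simp⟩

end FGLower

/-- **Monotone sections.** Let `p : S₁ → S₂` be a bijective monotone
map of posets and `Bp : B(S₁,≤) → B(S₂,≤)` the induced join-homomorphism (taking a
lower set to the lower closure of its image).  If a monotone map
`σ : B(S₂,≤) → B(S₁,≤)` is a section of `Bp`, then `σ` is right adjoint to `Bp` and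
preserves finite joins (including the empty join, i.e. bottom). -/
theorem stmt2 {S₁ S₂ : Type*} [PartialOrder S₁] [PartialOrder S₂]
    (p : S₁ → S₂) (hp : Monotone p) (hbij : Function.Bijective p)
    (Bp : FGLower S₁ → FGLower S₂)
    (hBp : ∀ L : FGLower S₁,
      ((Bp L).1 : Set S₂) = ↑(lowerClosure (p '' ((L.1 : Set S₁)))))
    (σ : FGLower S₂ → FGLower S₁) (hσmono : Monotone σ)
    (hsec : ∀ X : FGLower S₂, Bp (σ X) = X) :
    (∀ (Y : FGLower S₁) (X : FGLower S₂), Bp Y ≤ X ↔ Y ≤ σ X) ∧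
    (∀ X Y : FGLower S₂, σ (X ⊔ Y) = σ X ⊔ σ Y) ∧ σ ⊥ = ⊥ := by
  classical
  -- membership in Bp from membership in L
  have him : ∀ (L : FGLower S₁) (y : S₁), y ∈ L.1 → p y ∈ (Bp L).1 := by
    intro L y hy
    have : p y ∈ ((Bp L).1 : Set S₂) := by
      rw [hBp L]
      exact subset_lowerClosure ⟨y, hy, rfl⟩
    exact this
  -- key lemma: if p y ∈ X then y ∈ σ X
  have key : ∀ (y : S₁) (X : FGLower S₂), p y ∈ X.1 → y ∈ (σ X).1 := by
    intro y X hyX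
    set Xy : FGLower S₂ := ⟨lowerClosure {p y}, {p y}, by simp⟩ with hXydef
    have h1 : ((Bp (σ Xy)).1 : Set S₂) = ↑(lowerClosure (p '' ((σ Xy).1 : Set S₁))) :=
      hBp _
    rw [hsec Xy] at h1
    have hmem : p y ∈ (Xy.1 : Set S₂) := by
      simp [hXydef]
    rw [h1] at hmem
    obtain ⟨w, ⟨z, hz, rfl⟩, hle⟩ := hmem
    have hz2 : p z ∈ (Xy.1 : Set S₂) := by
      have : p z ∈ (lowerClosure (p '' ((σ Xy).1 : Set S₁)) : Set S₂) :=
        subset_lowerClosure ⟨z, hz, rfl⟩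
      rwa [← h1] at this
    have hz3 : p z ≤ p y := by simpa [hXydef] using hz2
    have hzy : z = y := hbij.1 (le_antisymm hz3 hle)
    subst hzy
    have hXle : Xy ≤ X := by
      show Xy.1 ≤ X.1
      intro a ha
      have : a ≤ p z := by simpa [hXydef] using ha
      exact X.1.lower this hyX
    exact hσmono hXle hz
  -- the adjunction
  have hadj : ∀ (Y : FGLower S₁) (X : FGLower S₂), Bp Y ≤ X ↔ Y ≤ σ X := by
    intro Y X
    constructor
    · intro h y hy
      exact key y X (h (him Y y hy))
    · intro h
      have h1 : ((Bp Y).1 : Set S₂) ⊆ ((Bp (σ X)).1 : Set S₂) := by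
        rw [hBp, hBp]
        exact lowerClosure_mono (Set.image_mono (f := p) h)
      rw [hsec X] at h1
      exact h1
  refine ⟨hadj, ?_, ?_⟩
  · intro X Y
    apply le_antisymm
    · intro y hy
      have hy2 : p y ∈ ((X ⊔ Y).1 : Set S₂) := by
        have := him (σ (X ⊔ Y)) y hy
        rwa [hsec] at this
      have : p y ∈ (X.1 : Set S₂) ∪ (Y.1 : Set S₂) := by
        exact hy2
      rcases this with h | h
      · exact le_sup_left (a := σ X) (b := σ Y) (key y X h)
      · exact le_sup_right (a := σ X) (b := σ Y) (key y Y h)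
    · exact sup_le (hσmono le_sup_left) (hσmono le_sup_right)
  · apply le_antisymm
    · intro y hy
      have hy2 : p y ∈ ((⊥ : FGLower S₂).1 : Set S₂) := by
        have := him (σ ⊥) y hy
        rwa [hsec] at this
      exact False.elim (show p y ∈ (∅ : Set S₂) from hy2)
    · exact bot_le
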